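/- For a fixed counting vector P ∈ W_N, write β₀ = #{i : pᵢ = 0} and β₁ = Σᵢ max(1−pᵢ, 0). Then: (i) the set of values {M[P] : M a co-ENF} is contained in [β₀, β₁]; (ii) β₀ = β₁ if and only if no entry of P lies in the open interval (0,1); (iii) if β₀ < β₁, then {M[P] : M a co-ENF} = [β₀, β₁], with all intermediate values attained by the family M_α[P] = Σ_{pᵢ=0} 1 + Σ_{pᵢ∈(0,1)} (1 − pᵢ^α), α ∈ (0,1], together with the endpoint α → 0. -/

import Mathlib

/-- A counting vector of dimension `N`: nonnegative entries summing to `N`. -/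
def IsCountingVector {N : ℕ} (P : Fin N → ℝ) : Prop :=
  (∀ i, 0 ≤ P i) ∧ ∑ i, P i = N

/-- An effective co-number function (co-ENF): additive under concatenation,
symmetric, continuous on each `W_N`, monotone under cumulation (M⁺), and with
boundary values `M(N,0,...,0) = N − 1`. -/
def IsCoENF (M : ∀ N : ℕ, (Fin N → ℝ) → ℝ) : Prop :=
  -- (A) additivity
  (∀ (N K : ℕ) (P : Fin N → ℝ) (Q : Fin K → ℝ),
    IsCountingVector P → IsCountingVector Q →
    M (N + K) (Fin.append P Q) = M N P + M K Q) ∧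
  -- (S) symmetry
  (∀ (N : ℕ) (P : Fin N → ℝ), IsCountingVector P →
    ∀ σ : Equiv.Perm (Fin N), M N (P ∘ σ) = M N P) ∧
  -- (C) continuity on each W_N
  (∀ N : ℕ, ContinuousOn (M N) {P : Fin N → ℝ | IsCountingVector P}) ∧
  -- (M⁺) cumulation monotonicity
  (∀ (N : ℕ) (P : Fin N → ℝ), IsCountingVector P →
    ∀ i j : Fin N, i ≠ j → P i ≤ P j →
    ∀ ε : ℝ, 0 < ε → ε ≤ P i → ε ≤ N - P j →
      M N P ≤ M N (Function.update (Function.update P i (P i - ε)) j (P j + ε))) ∧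
  -- (co-B2) boundary values
  (∀ N : ℕ, M (N + 1) (fun k => if k = 0 then ((N + 1 : ℕ) : ℝ) else 0) = N)

namespace CoProof
open Finset

def pS {n : ℕ} (v : Fin n → ℝ) (k : ℕ) : ℝ :=
  ∑ i ∈ Finset.univ.filter (fun i : Fin n => (i : ℕ) < k), v i

lemma pS_zero {n : ℕ} (v : Fin n → ℝ) : pS v 0 = 0 := by simp [pS]

lemma pS_mono {n : ℕ} {v : Fin n → ℝ} (h0 : ∀ i, 0 ≤ v i) {k l : ℕ} (hkl : k ≤ l) :
    pS v k ≤ pS v l := by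
  apply Finset.sum_le_sum_of_subset_of_nonneg
  · intro i hi
    simp only [mem_filter, mem_univ, true_and] at hi ⊢
    omega
  · intro i _ _; exact h0 i

lemma pS_total {n : ℕ} (v : Fin n → ℝ) {k : ℕ} (hk : n ≤ k) : pS v k = ∑ i, v i := by
  apply Finset.sum_congr _ (fun _ _ => rfl)
  rw [Finset.filter_true_of_mem]
  intro i _
  exact lt_of_lt_of_le i.isLt hk

lemma pS_succ_of_lt {n : ℕ} (v : Fin n → ℝ) {k : ℕ} (hk : k < n) :
    pS v (k + 1) = pS v k + v ⟨k, hk⟩ := by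
  unfold pS
  rw [show (Finset.univ.filter (fun i : Fin n => (i : ℕ) < k + 1))
      = insert ⟨k, hk⟩ (Finset.univ.filter (fun i : Fin n => (i : ℕ) < k)) by
    ext i
    simp only [mem_filter, mem_univ, true_and, mem_insert, Fin.ext_iff]
    omega]
  rw [Finset.sum_insert (by simp)]
  ring

lemma entry_le_of_CV {n : ℕ} {v : Fin n → ℝ} (hv : IsCountingVector v) (i : Fin n) :
    v i ≤ n := by
  rw [← hv.2]
  exact Finset.single_le_sum (fun j _ => hv.1 j) (Finset.mem_univ i)

lemma CV_comp_perm {n : ℕ} {v : Fin n → ℝ} (hv : IsCountingVector v)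
    (σ : Equiv.Perm (Fin n)) : IsCountingVector (v ∘ σ) := by
  refine ⟨fun i => hv.1 _, ?_⟩
  rw [← hv.2]
  exact Equiv.sum_comp σ v

def AxS (M : ∀ N : ℕ, (Fin N → ℝ) → ℝ) : Prop :=
  ∀ (N : ℕ) (P : Fin N → ℝ), IsCountingVector P →
    ∀ σ : Equiv.Perm (Fin N), M N (P ∘ σ) = M N P

def AxMp (M : ∀ N : ℕ, (Fin N → ℝ) → ℝ) : Prop :=
  ∀ (N : ℕ) (P : Fin N → ℝ), IsCountingVector P →
    ∀ i j : Fin N, i ≠ j → P i ≤ P j →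
    ∀ ε : ℝ, 0 < ε → ε ≤ P i → ε ≤ N - P j →
      M N P ≤ M N (Function.update (Function.update P i (P i - ε)) j (P j + ε))

theorem core {M : ∀ N : ℕ, (Fin N → ℝ) → ℝ} (hS : AxS M) (hMp : AxMp M) :
    ∀ (d n : ℕ) (x y : Fin n → ℝ), IsCountingVector x → IsCountingVector y →
    Antitone x → Antitone y →
    ((Finset.univ.filter (fun i => x i ≠ y i)).card ≤ d) →
    (∀ k : ℕ, pS x k ≤ pS y k) → M n x ≤ M n y := by
  intro d
  induction d with
  | zero =>
    intro n x y _ _ _ _ hcard _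
    have hemp : (Finset.univ.filter (fun i => x i ≠ y i)) = ∅ :=
      Finset.card_eq_zero.mp (Nat.le_zero.mp hcard)
    have hxy : x = y := by
      funext i
      by_contra hne
      have : i ∈ Finset.univ.filter (fun i => x i ≠ y i) := by
        simp [hne]
      rw [hemp] at this
      exact absurd this (Finset.notMem_empty i)
    rw [hxy]
  | succ d ih =>
    intro n x y hx hy hax hay hcard hps
    by_cases hxy : x = y
    · rw [hxy]
    -- the set A where x < y is nonempty
    have hAne : (Finset.univ.filter (fun i => x i < y i)).Nonempty := by
      by_contra hA
      rw [Finset.not_nonempty_iff_eq_empty, Finset.filter_eq_empty_iff] at hA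
      apply hxy
      have h1 : ∀ j, y j ≤ x j := fun j => not_lt.mp (hA (mem_univ j))
      have hsum : ∑ j, (x j - y j) = 0 := by
        rw [Finset.sum_sub_distrib, hx.2, hy.2]; ring
      funext i
      have := (Finset.sum_eq_zero_iff_of_nonneg
        (fun j _ => sub_nonneg.mpr (h1 j))).mp hsum i (mem_univ i)
      linarith
    set A := Finset.univ.filter (fun i => x i < y i) with hA_def
    set a := A.max' hAne with ha_def
    have haA : a ∈ A := A.max'_mem hAne
    have hxa : x a < y a := by
      have := haA; rw [hA_def, mem_filter] at this; exact this.2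
    have ha_max : ∀ i, x i < y i → i ≤ a := by
      intro i hi
      exact A.le_max' i (by rw [hA_def, mem_filter]; exact ⟨mem_univ i, hi⟩)
    -- base estimate at a+1
    have hbase2 : pS x ((a : ℕ) + 1) + (y a - x a) ≤ pS y ((a : ℕ) + 1) := by
      rw [pS_succ_of_lt x a.isLt, pS_succ_of_lt y a.isLt]
      have := hps (a : ℕ)
      simp only [Fin.eta]
      linarith
    -- the set B beyond a where y < x is nonempty
    have hBne : (Finset.univ.filter (fun i => a < i ∧ y i < x i)).Nonempty := by
      by_contra hB
      rw [Finset.not_nonempty_iff_eq_empty, Finset.filter_eq_empty_iff] at hB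
      have heq : ∀ i : Fin n, a < i → x i = y i := by
        intro i hi
        have h2 : ¬ (y i < x i) := fun hcon => (hB (mem_univ i)) ⟨hi, hcon⟩
        have h3 : ¬ (x i < y i) := fun hcon => absurd (ha_max i hcon) (not_le.mpr hi)
        linarith [not_lt.mp h2, not_lt.mp h3]
      -- split total sum
      have hsplit := Finset.sum_filter_add_sum_filter_not Finset.univ
        (fun i : Fin n => (i : ℕ) < (a : ℕ) + 1) (fun i => y i - x i)
      have hrest : ∑ i ∈ Finset.univ.filter (fun i : Fin n => ¬ ((i : ℕ) < (a : ℕ) + 1)),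
          (y i - x i) = 0 := by
        apply Finset.sum_eq_zero
        intro i hi
        rw [mem_filter] at hi
        have : a < i := by
          rw [Fin.lt_def]; omega
        rw [heq i this]; ring
      have htot : ∑ i, (y i - x i) = 0 := by
        rw [Finset.sum_sub_distrib, hx.2, hy.2]; ring
      have hfirst : ∑ i ∈ Finset.univ.filter (fun i : Fin n => (i : ℕ) < (a : ℕ) + 1),
          (y i - x i) = pS y ((a:ℕ)+1) - pS x ((a:ℕ)+1) := by
        rw [Finset.sum_sub_distrib]; rfl
      rw [hfirst, hrest] at hsplit
      rw [htot] at hsplit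
      linarith
    set B := Finset.univ.filter (fun i => a < i ∧ y i < x i) with hB_def
    set b := B.min' hBne with hb_def
    have hbB : b ∈ B := B.min'_mem hBne
    have hab : a < b := by
      have := hbB; rw [hB_def, mem_filter] at this; exact this.2.1
    have hyb : y b < x b := by
      have := hbB; rw [hB_def, mem_filter] at this; exact this.2.2
    have hb_min : ∀ i, a < i → y i < x i → b ≤ i := by
      intro i h1 h2
      exact B.min'_le i (by rw [hB_def, mem_filter]; exact ⟨mem_univ i, h1, h2⟩)
    have hbetween : ∀ i, a < i → i < b → x i = y i := by
      intro i h1 h2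
      have h3 : ¬ (y i < x i) := fun hcon => absurd (hb_min i h1 hcon) (not_le.mpr h2)
      have h4 : ¬ (x i < y i) := fun hcon => absurd (ha_max i hcon) (not_le.mpr h1)
      linarith [not_lt.mp h3, not_lt.mp h4]
    have hxba : x b ≤ x a := hax hab.le
    set δ := min (y a - x a) (x b - y b) with hδ_def
    have hδpos : 0 < δ := lt_min (by linarith) (by linarith)
    have hδ1 : δ ≤ y a - x a := min_le_left _ _
    have hδ2 : δ ≤ x b - y b := min_le_right _ _
    set y' : Fin n → ℝ := fun i => if i = a then y a - δ else if i = b then y b + δ else y i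
      with hy'_def
    have hba_ne : b ≠ a := hab.ne'
    have hya' : y' a = y a - δ := by simp [hy'_def]
    have hyb' : y' b = y b + δ := by simp [hy'_def, hba_ne]
    have hyt : ∀ t, t ≠ a → t ≠ b → y' t = y t := by
      intro t h1 h2; simp [hy'_def, h1, h2]
    -- counting vector y'
    have hy'sum : ∑ i, y' i = ∑ i, y i := by
      have hdiff : ∀ i, y' i - y i =
          (if i = a then -δ else 0) + (if i = b then δ else 0) := by
        intro i
        by_cases h1 : i = a
        · subst h1; rw [hya', if_pos rfl, if_neg (fun h => hba_ne h.symm)]; ring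
        by_cases h2 : i = b
        · subst h2; rw [hyb', if_neg h1, if_pos rfl]; ring
        · rw [hyt i h1 h2, if_neg h1, if_neg h2]; ring
      have : ∑ i, (y' i - y i) = 0 := by
        calc ∑ i, (y' i - y i)
            = ∑ i, ((if i = a then -δ else 0) + (if i = b then δ else 0)) :=
              Finset.sum_congr rfl (fun i _ => hdiff i)
          _ = (∑ i, (if i = a then -δ else 0)) + (∑ i, (if i = b then δ else 0)) :=
              Finset.sum_add_distrib
          _ = 0 := by
              rw [Finset.sum_ite_eq' Finset.univ a (fun _ => -δ),
                Finset.sum_ite_eq' Finset.univ b (fun _ => δ)]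
              simp
      have h2 : ∑ i, (y' i - y i) = ∑ i, y' i - ∑ i, y i := Finset.sum_sub_distrib _ _
      linarith [h2 ▸ this]
    have hy'CV : IsCountingVector y' := by
      constructor
      · intro i
        by_cases h1 : i = a
        · subst h1; rw [hya']; linarith [hx.1 a]
        by_cases h2 : i = b
        · subst h2; rw [hyb']; linarith [hy.1 b]
        · rw [hyt i h1 h2]; exact hy.1 i
      · rw [hy'sum]; exact hy.2
    -- antitone y'
    have hay' : Antitone y' := by
      intro i j hij
      rcases eq_or_lt_of_le hij with heq | hlt
      · subst heq; exact le_refl _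
      by_cases hja : j ≤ a
      · -- i < j ≤ a
        have hia : i < a := lt_of_lt_of_le hlt hja
        rw [hyt i hia.ne (hia.trans hab).ne]
        rcases eq_or_lt_of_le hja with hja' | hja'
        · rw [hja', hya']
          have : y a ≤ y i := hay (hja' ▸ hlt.le)
          linarith
        · rw [hyt j hja'.ne (hja'.trans hab).ne]
          exact hay hij
      push_neg at hja
      by_cases hjb : j ≤ b
      · -- a < j ≤ b
        have hyj_le : y' j ≤ x a := by
          rcases eq_or_lt_of_le hjb with hjb' | hjb'
          · rw [hjb', hyb']; linarith
          · rw [hyt j hja.ne' hjb'.ne]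
            rw [← hbetween j hja hjb']
            exact hax (le_of_lt hja)
        by_cases hia : i ≤ a
        · have : x a ≤ y' i := by
            rcases eq_or_lt_of_le hia with hia' | hia'
            · rw [hia', hya']; linarith
            · rw [hyt i hia'.ne (hia'.trans hab).ne]
              have : y a ≤ y i := hay hia'.le
              linarith
          linarith
        push_neg at hia
        -- a < i < j ≤ b
        have hib : i < b := lt_of_lt_of_le hlt hjb
        rw [hyt i hia.ne' hib.ne]
        rcases eq_or_lt_of_le hjb with hjb' | hjb'
        · rw [hjb', hyb', ← hbetween i hia hib]
          have : x b ≤ x i := hax hib.le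
          linarith
        · rw [hyt j hja.ne' hjb'.ne]
          exact hay hij
      push_neg at hjb
      -- b < j
      have hyj : y' j = y j := hyt j (hab.trans hjb).ne' hjb.ne'
      have hyjb : y j ≤ y b := hay hjb.le
      by_cases hia : i ≤ a
      · have : x a ≤ y' i := by
          rcases eq_or_lt_of_le hia with hia' | hia'
          · rw [hia', hya']; linarith
          · rw [hyt i hia'.ne (hia'.trans hab).ne]
            have := hay hia'.le
            linarith
        rw [hyj]; linarith
      push_neg at hia
      by_cases hib : i ≤ b
      · rcases eq_or_lt_of_le hib with hib' | hib'
        · rw [hib', hyb', hyj]; linarith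
        · rw [hyt i hia.ne' hib'.ne, ← hbetween i hia hib', hyj]
          have : x b ≤ x i := hax hib'.le
          linarith
      push_neg at hib
      rw [hyj, hyt i hia.ne' hib.ne']
      exact hay hij
    -- prefix sums of y'
    have hpSy' : ∀ k : ℕ, pS y' k = pS y k +
        ((if (a : ℕ) < k then -δ else 0) + (if (b : ℕ) < k then δ else 0)) := by
      intro k
      have hdiff : ∀ i : Fin n, y' i - y i =
          (if i = a then -δ else 0) + (if i = b then δ else 0) := by
        intro i
        by_cases h1 : i = a
        · subst h1; rw [hya', if_pos rfl, if_neg (fun h => hba_ne h.symm)]; ring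
        by_cases h2 : i = b
        · subst h2; rw [hyb', if_neg h1, if_pos rfl]; ring
        · rw [hyt i h1 h2, if_neg h1, if_neg h2]; ring
      have h3 : pS y' k - pS y k =
          ∑ i ∈ Finset.univ.filter (fun i : Fin n => (i : ℕ) < k), (y' i - y i) := by
        rw [Finset.sum_sub_distrib]; rfl
      rw [Finset.sum_congr rfl (fun i _ => hdiff i), Finset.sum_add_distrib,
        Finset.sum_ite_eq' _ a (fun _ => -δ), Finset.sum_ite_eq' _ b (fun _ => δ)] at h3
      simp only [mem_filter, mem_univ, true_and] at h3
      linarith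
    have hps' : ∀ k : ℕ, pS x k ≤ pS y' k := by
      intro k
      by_cases hka : (a : ℕ) < k
      · by_cases hkb : (b : ℕ) < k
        · rw [hpSy' k, if_pos hka, if_pos hkb]
          have := hps k; linarith
        · -- a < k ≤ b : middle region
          rw [hpSy' k, if_pos hka, if_neg hkb]
          have hmid : ∀ m : ℕ, (a : ℕ) + 1 ≤ m → (m ≤ (b : ℕ) → δ ≤ pS y m - pS x m) := by
            intro m hm
            induction m, hm using Nat.le_induction with
            | base => intro _; linarith [hbase2]
            | succ m hm ihm =>
              intro hmb
              have hmb' : m < (b : ℕ) := by omega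
              have hmn : m < n := lt_trans hmb' b.isLt
              have hma : a < (⟨m, hmn⟩ : Fin n) := by
                rw [Fin.lt_def]; simpa using (by omega : (a : ℕ) < m)
              have hmbf : (⟨m, hmn⟩ : Fin n) < b := by
                rw [Fin.lt_def]; simpa using hmb'
              have heqm := hbetween ⟨m, hmn⟩ hma hmbf
              rw [pS_succ_of_lt x hmn, pS_succ_of_lt y hmn, heqm]
              have := ihm (le_of_lt hmb')
              linarith
          have := hmid k (by omega) (by omega)
          linarith
      · have hkb : ¬ ((b : ℕ) < k) := by
          intro hkb
          exact hka (lt_trans (by exact_mod_cast hab) hkb)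
        rw [hpSy' k, if_neg hka, if_neg hkb]
        have := hps k; linarith
    -- the number of disagreements decreased
    have hsub : (Finset.univ.filter (fun i => x i ≠ y' i)) ⊆
        (Finset.univ.filter (fun i => x i ≠ y i)) := by
      intro i hi
      rw [mem_filter] at hi ⊢
      refine ⟨mem_univ i, ?_⟩
      by_cases h1 : i = a
      · subst h1; exact hxa.ne
      by_cases h2 : i = b
      · subst h2; exact hyb.ne'
      · rw [← hyt i h1 h2]; exact hi.2
    have hwit : ∃ w : Fin n, w ∈ (Finset.univ.filter (fun i => x i ≠ y i)) ∧
        w ∉ (Finset.univ.filter (fun i => x i ≠ y' i)) := by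
      rcases min_cases (y a - x a) (x b - y b) with ⟨hmin, _⟩ | ⟨hmin, _⟩
      · refine ⟨a, ?_, ?_⟩
        · rw [mem_filter]; exact ⟨mem_univ a, hxa.ne⟩
        · rw [mem_filter]
          push_neg
          intro _
          rw [hya', hδ_def, hmin]; ring
      · refine ⟨b, ?_, ?_⟩
        · rw [mem_filter]; exact ⟨mem_univ b, hyb.ne'⟩
        · rw [mem_filter]
          push_neg
          intro _
          rw [hyb', hδ_def, hmin]; ring
    have hcard' : (Finset.univ.filter (fun i => x i ≠ y' i)).card ≤ d := by
      obtain ⟨w, hw1, hw2⟩ := hwit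
      have : (Finset.univ.filter (fun i => x i ≠ y' i)) ⊂
          (Finset.univ.filter (fun i => x i ≠ y i)) :=
        Finset.ssubset_iff_of_subset hsub |>.mpr ⟨w, hw1, hw2⟩
      have := Finset.card_lt_card this
      omega
    -- M y' ≤ M y
    have hstep : M n y' ≤ M n y := by
      by_cases hcase : y b + δ ≤ y a - δ
      · have h1 : δ ≤ y' b := by rw [hyb']; linarith [hy.1 b]
        have h2 : δ ≤ (n : ℝ) - y' a := by
          rw [hya']
          have := entry_le_of_CV hy a
          linarith
        have hble : y' b ≤ y' a := by rw [hya', hyb']; exact hcase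
        have happ := hMp n y' hy'CV b a hba_ne hble δ hδpos h1 h2
        have htarget : Function.update (Function.update y' b (y' b - δ)) a (y' a + δ) = y := by
          funext t
          rw [Function.update_apply, Function.update_apply]
          by_cases h1t : t = a
          · rw [if_pos h1t, hya', h1t]; ring
          rw [if_neg h1t]
          by_cases h2t : t = b
          · rw [if_pos h2t, hyb', h2t]; ring
          · rw [if_neg h2t]; exact hyt t h1t h2t
        rwa [htarget] at happ
      · push_neg at hcase
        set σ := Equiv.swap a b with hσ_def
        set y'' := y' ∘ σ with hy''_def
        have hy''CV : IsCountingVector y'' := CV_comp_perm hy'CV σ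
        have hMS : M n y'' = M n y' := hS n y' hy'CV σ
        have hy''a : y'' a = y' b := by
          rw [hy''_def]; simp [hσ_def, Equiv.swap_apply_left]
        have hy''b : y'' b = y' a := by
          rw [hy''_def]; simp [hσ_def, Equiv.swap_apply_right]
        set ε₂ := (y a - δ) - y b with hε₂_def
        have hε₂pos : 0 < ε₂ := by
          have h1 : x a ≤ y a - δ := by linarith
          linarith
        have hble2 : y'' b ≤ y'' a := by
          rw [hy''a, hy''b, hya', hyb']; linarith
        have h1 : ε₂ ≤ y'' b := by rw [hy''b, hya']; linarith [hy.1 b]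
        have h2 : ε₂ ≤ (n : ℝ) - y'' a := by
          rw [hy''a, hyb']
          have := entry_le_of_CV hy a
          linarith
        have happ := hMp n y'' hy''CV b a hba_ne hble2 ε₂ hε₂pos h1 h2
        have htarget : Function.update (Function.update y'' b (y'' b - ε₂)) a (y'' a + ε₂) = y := by
          funext t
          rw [Function.update_apply, Function.update_apply]
          by_cases h1t : t = a
          · rw [if_pos h1t, hy''a, hyb', h1t]; ring
          rw [if_neg h1t]
          by_cases h2t : t = b
          · rw [if_pos h2t, hy''b, hya', h2t]; ring
          · rw [if_neg h2t, hy''_def]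
            have hσt : σ t = t := by
              rw [hσ_def]; exact Equiv.swap_apply_of_ne_of_ne h1t h2t
            show y' (σ t) = y t
            rw [hσt]; exact hyt t h1t h2t
        rw [htarget] at happ
        calc M n y' = M n y'' := hMS.symm
          _ ≤ M n y := happ
    calc M n x ≤ M n y' := ih n x y' hx hy'CV hax hay' hcard' hps'
      _ ≤ M n y := hstep

open Finset

/-- the multiset of values of a tuple -/
def mexp {n : ℕ} (f : Fin n → ℝ) : Multiset ℝ := Multiset.map f Finset.univ.val

lemma mexp_eq_ofFn {n : ℕ} (f : Fin n → ℝ) : mexp f = ↑(List.ofFn f) := by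
  unfold mexp
  rw [Fin.univ_def]
  show Multiset.map f ↑(List.finRange n) = _
  rw [List.ofFn_eq_map]
  rfl

lemma exists_perm_of_mexp_eq {n : ℕ} {f g : Fin n → ℝ} (h : mexp f = mexp g) :
    ∃ σ : Equiv.Perm (Fin n), f ∘ σ = g := by
  have hlist : (List.ofFn f).Perm (List.ofFn g) := by
    rw [← Multiset.coe_eq_coe, ← mexp_eq_ofFn, ← mexp_eq_ofFn]
    exact h
  have h1 : Monotone (f ∘ Tuple.sort f) := Tuple.monotone_sort f
  have h2 : Monotone (g ∘ Tuple.sort g) := Tuple.monotone_sort g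
  have hperm : (List.ofFn (f ∘ Tuple.sort f)).Perm (List.ofFn (g ∘ Tuple.sort g)) :=
    ((Tuple.sort f).ofFn_comp_perm f).trans (hlist.trans ((Tuple.sort g).ofFn_comp_perm g).symm)
  have heq : f ∘ Tuple.sort f = g ∘ Tuple.sort g :=
    List.ofFn_injective (List.Perm.eq_of_sortedLE h1.sortedLE_ofFn h2.sortedLE_ofFn hperm)
  refine ⟨(Tuple.sort g).symm.trans (Tuple.sort f), ?_⟩
  funext i
  have := congrFun heq ((Tuple.sort g).symm i)
  simpa using this

lemma exists_antitone_perm {n : ℕ} (f : Fin n → ℝ) :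
    ∃ σ : Equiv.Perm (Fin n), Antitone (f ∘ σ) := by
  refine ⟨(Fin.revPerm).trans (Tuple.sort f), ?_⟩
  have h1 : Monotone (f ∘ Tuple.sort f) := Tuple.monotone_sort f
  intro i j hij
  have : Fin.rev j ≤ Fin.rev i := Fin.rev_le_rev.mpr hij
  exact h1 this

lemma mexp_comp_perm {n : ℕ} (f : Fin n → ℝ) (σ : Equiv.Perm (Fin n)) :
    mexp (f ∘ σ) = mexp f := by
  rw [mexp_eq_ofFn, mexp_eq_ofFn, Multiset.coe_eq_coe]
  exact σ.ofFn_comp_perm f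

lemma mexp_append {m n : ℕ} (u : Fin m → ℝ) (v : Fin n → ℝ) :
    mexp (Fin.append u v) = mexp u + mexp v := by
  rw [mexp_eq_ofFn, mexp_eq_ofFn, mexp_eq_ofFn, List.ofFn_fin_append]
  rfl

lemma mexp_const {n : ℕ} (c : ℝ) : mexp (fun _ : Fin n => c) = Multiset.replicate n c := by
  rw [mexp_eq_ofFn, List.ofFn_const]
  simp [Multiset.coe_replicate]

lemma mexp_cast {m n : ℕ} (h : m = n) (f : Fin n → ℝ) :
    mexp (f ∘ Fin.cast h) = mexp f := by
  subst h
  rfl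


lemma card_filter_val_lt (n k : ℕ) :
    (Finset.univ.filter (fun i : Fin n => (i : ℕ) < k)).card = min k n := by
  induction k with
  | zero => simp
  | succ k ihk =>
    by_cases hk : k < n
    · rw [show (Finset.univ.filter (fun i : Fin n => (i : ℕ) < k + 1))
          = insert ⟨k, hk⟩ (Finset.univ.filter (fun i : Fin n => (i : ℕ) < k)) by
        ext i
        simp only [mem_filter, mem_univ, true_and, mem_insert, Fin.ext_iff]
        omega]
      rw [Finset.card_insert_of_notMem (by simp), ihk]
      omega
    · rw [show (Finset.univ.filter (fun i : Fin n => (i : ℕ) < k + 1))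
          = (Finset.univ.filter (fun i : Fin n => (i : ℕ) < k)) by
        ext i
        simp only [mem_filter, mem_univ, true_and]
        have := i.isLt; omega]
      rw [ihk]
      omega

lemma pS_split {n : ℕ} (v : Fin n → ℝ) {j k : ℕ} (hjk : j ≤ k) :
    pS v k = pS v j + ∑ i ∈ Finset.univ.filter (fun i : Fin n => j ≤ (i : ℕ) ∧ (i : ℕ) < k), v i := by
  unfold pS
  rw [← Finset.sum_union]
  · apply Finset.sum_congr _ (fun _ _ => rfl)
    ext i
    simp only [mem_filter, mem_univ, true_and, mem_union]
    omega
  · rw [Finset.disjoint_filter]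
    intro i _ h1 h2
    omega

lemma card_filter_band (n j k : ℕ) :
    (Finset.univ.filter (fun i : Fin n => j ≤ (i : ℕ) ∧ (i : ℕ) < k)).card
      = min k n - min j n := by
  have hsub : (Finset.univ.filter (fun i : Fin n => (i : ℕ) < j))
      ⊆ (Finset.univ.filter (fun i : Fin n => (i : ℕ) < max j k)) := by
    intro i hi
    simp only [mem_filter, mem_univ, true_and] at hi ⊢
    omega
  by_cases hjk : j ≤ k
  · have : (Finset.univ.filter (fun i : Fin n => j ≤ (i : ℕ) ∧ (i : ℕ) < k))
        = (Finset.univ.filter (fun i : Fin n => (i : ℕ) < k)) \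
          (Finset.univ.filter (fun i : Fin n => (i : ℕ) < j)) := by
      ext i
      simp only [mem_filter, mem_univ, true_and, mem_sdiff]
      omega
    rw [this, Finset.card_sdiff_of_subset (by
      intro i hi
      simp only [mem_filter, mem_univ, true_and] at hi ⊢
      omega), card_filter_val_lt, card_filter_val_lt]
  · have : (Finset.univ.filter (fun i : Fin n => j ≤ (i : ℕ) ∧ (i : ℕ) < k)) = ∅ := by
      rw [Finset.filter_eq_empty_iff]
      intro i _
      omega
    rw [this]
    simp only [Finset.card_empty]
    omega

/-- prefix sums of an antitone tuple dominate all subset sums -/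
lemma sum_subset_le_pS {n : ℕ} {w : Fin n → ℝ} (hw : Antitone w) (s : Finset (Fin n)) :
    ∑ i ∈ s, w i ≤ pS w s.card := by
  have hk : s.card ≤ n := by
    have := Finset.card_le_univ s
    simpa using this
  set e := s.orderEmbOfFin rfl with he_def
  have hmap : Finset.univ.map e.toEmbedding = s := by
    ext i
    rw [Finset.mem_map]
    constructor
    · rintro ⟨j, _, rfl⟩
      exact s.orderEmbOfFin_mem rfl j
    · intro hi
      have : i ∈ Set.range e := by rw [Finset.range_orderEmbOfFin]; exact hi
      obtain ⟨j, hj⟩ := this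
      exact ⟨j, mem_univ j, hj⟩
  have hle : ∀ m : ℕ, ∀ h : m < s.card, m ≤ ((e ⟨m, h⟩) : ℕ) := by
    intro m
    induction m with
    | zero => intro h; exact Nat.zero_le _
    | succ m ihm =>
      intro h
      have hm : m < s.card := lt_trans (Nat.lt_succ_self m) h
      have h3 : ((e ⟨m, hm⟩) : ℕ) < ((e ⟨m+1, h⟩) : ℕ) :=
        e.strictMono (show (⟨m, hm⟩ : Fin s.card) < ⟨m+1, h⟩ by simp [Fin.lt_def])
      have h2 := ihm hm
      omega
  have h1 : ∑ i ∈ Finset.univ.map e.toEmbedding, w i = ∑ j : Fin s.card, w (e j) :=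
    Finset.sum_map _ _ _
  rw [hmap] at h1
  have h2 : pS w s.card = ∑ j : Fin s.card, w (Fin.castLE hk j) := by
    unfold pS
    have hset : Finset.univ.filter (fun i : Fin n => (i : ℕ) < s.card)
        = Finset.univ.map (Fin.castLEEmb hk) := by
      ext i
      constructor
      · intro hi
        have hi' : (i : ℕ) < s.card := by simpa using hi
        exact Finset.mem_map.mpr ⟨⟨(i : ℕ), hi'⟩, mem_univ _, by ext; simp [Fin.castLEEmb]⟩
      · intro hi
        obtain ⟨j, _, rfl⟩ := Finset.mem_map.mp hi
        simp only [mem_filter, mem_univ, true_and]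
        simpa [Fin.castLEEmb] using j.isLt
    rw [hset]
    exact Finset.sum_map _ _ _
  rw [h1, h2]
  apply Finset.sum_le_sum
  intro j _
  apply hw
  rw [Fin.le_def]
  have := hle (j : ℕ) j.isLt
  simpa using this

/-- subset sums of any vector are dominated by prefix sums of its sorted rearrangement -/
lemma sum_subset_le_pS_perm {n : ℕ} {v : Fin n → ℝ} (h0 : ∀ i, 0 ≤ v i)
    {σ : Equiv.Perm (Fin n)} (hw : Antitone (v ∘ σ)) (s : Finset (Fin n)) {k : ℕ}
    (hk : s.card ≤ k) : ∑ i ∈ s, v i ≤ pS (v ∘ σ) k := by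
  have h1 : ∑ i ∈ s, v i = ∑ i ∈ s.image σ.symm, (v ∘ σ) i := by
    rw [Finset.sum_image (fun a _ b _ hab => σ.symm.injective hab)]
    apply Finset.sum_congr rfl
    intro i _
    simp
  rw [h1]
  have h2 : (s.image σ.symm).card = s.card := Finset.card_image_of_injective s σ.symm.injective
  calc ∑ i ∈ s.image σ.symm, (v ∘ σ) i ≤ pS (v ∘ σ) ((s.image σ.symm).card) :=
        sum_subset_le_pS hw _
    _ ≤ pS (v ∘ σ) k := pS_mono (fun i => h0 _) (by omega)

/-- generic bound: prefix sum is at most `k * c` when all entries are at most `c` -/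
lemma pS_le_of_entries_le {n : ℕ} {v : Fin n → ℝ} {c : ℝ} (h : ∀ i, v i ≤ c) (hc : 0 ≤ c)
    (k : ℕ) : pS v k ≤ k * c := by
  unfold pS
  calc ∑ i ∈ Finset.univ.filter (fun i : Fin n => (i : ℕ) < k), v i
      ≤ ∑ _i ∈ Finset.univ.filter (fun i : Fin n => (i : ℕ) < k), c :=
        Finset.sum_le_sum (fun i _ => h i)
    _ = ((Finset.univ.filter (fun i : Fin n => (i : ℕ) < k)).card : ℝ) * c := by
        rw [Finset.sum_const, nsmul_eq_mul]
    _ ≤ k * c := by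
        apply mul_le_mul_of_nonneg_right _ hc
        have := card_filter_val_lt n k
        have h2 : (Finset.univ.filter (fun i : Fin n => (i : ℕ) < k)).card ≤ k := by omega
        exact_mod_cast h2

lemma pS_le_total {n : ℕ} {v : Fin n → ℝ} (h0 : ∀ i, 0 ≤ v i) (k : ℕ) :
    pS v k ≤ ∑ i, v i := by
  apply Finset.sum_le_sum_of_subset_of_nonneg (Finset.filter_subset _ _)
  intro i _ _
  exact h0 i

/-- excess bound: `pS v k ≤ k + ∑ (v i - 1)⁺` -/
lemma pS_le_excess {n : ℕ} (v : Fin n → ℝ) (k : ℕ) :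
    pS v k ≤ k + ∑ i, max (v i - 1) 0 := by
  unfold pS
  set s := Finset.univ.filter (fun i : Fin n => (i : ℕ) < k) with hs
  calc ∑ i ∈ s, v i ≤ ∑ i ∈ s, (1 + max (v i - 1) 0) := by
        apply Finset.sum_le_sum
        intro i _
        rcases le_or_gt (v i) 1 with h | h
        · have : max (v i - 1) 0 = 0 := max_eq_right (by linarith)
          linarith
        · have : max (v i - 1) 0 = v i - 1 := max_eq_left (by linarith)
          linarith
    _ = s.card + ∑ i ∈ s, max (v i - 1) 0 := by
        rw [Finset.sum_add_distrib, Finset.sum_const, nsmul_eq_mul, mul_one]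
    _ ≤ k + ∑ i, max (v i - 1) 0 := by
        have h1 : s.card ≤ k := by
          rw [hs, card_filter_val_lt]; omega
        have h2 : ∑ i ∈ s, max (v i - 1) 0 ≤ ∑ i, max (v i - 1) 0 := by
          apply Finset.sum_le_sum_of_subset_of_nonneg (Finset.filter_subset _ _)
          intro i _ _
          exact le_max_right _ _
        have h1' : (s.card : ℝ) ≤ k := by exact_mod_cast h1
        linarith

/-! ### building blocks -/

def onesV (m : ℕ) : Fin m → ℝ := fun _ => 1

def bvec (η : ℕ) : Fin (η + 1) → ℝ := fun k => if k = 0 then ((η + 1 : ℕ) : ℝ) else 0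

lemma CV_ones (m : ℕ) : IsCountingVector (onesV m) := by
  constructor
  · intro i; norm_num [onesV]
  · simp [onesV]

lemma CV_bvec (η : ℕ) : IsCountingVector (bvec η) := by
  constructor
  · intro i
    unfold bvec
    split
    · positivity
    · exact le_refl 0
  · rw [show ∑ i : Fin (η+1), bvec η i
        = ∑ i : Fin (η+1), (if i = (0 : Fin (η+1)) then ((η + 1 : ℕ) : ℝ) else 0) from rfl,
      Finset.sum_ite_eq' Finset.univ (0 : Fin (η + 1)) (fun _ => ((η + 1 : ℕ) : ℝ))]
    simp

lemma sum_append {m n : ℕ} (u : Fin m → ℝ) (v : Fin n → ℝ) :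
    ∑ i, Fin.append u v i = (∑ i, u i) + ∑ i, v i := by
  rw [Fin.sum_univ_add]
  congr 1
  · exact Finset.sum_congr rfl (fun i _ => Fin.append_left u v i)
  · exact Finset.sum_congr rfl (fun i _ => Fin.append_right u v i)

lemma append_comp (g : ℝ → ℝ) {m n : ℕ} (u : Fin m → ℝ) (v : Fin n → ℝ) :
    g ∘ (Fin.append u v) = Fin.append (g ∘ u) (g ∘ v) := by
  funext i
  induction i using Fin.addCases with
  | left i => simp [Fin.append_left]
  | right i => simp [Fin.append_right]

lemma CV_append {m n : ℕ} {u : Fin m → ℝ} {v : Fin n → ℝ}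
    (hu : IsCountingVector u) (hv : IsCountingVector v) :
    IsCountingVector (Fin.append u v) := by
  constructor
  · intro i
    induction i using Fin.addCases with
    | left i => rw [Fin.append_left]; exact hu.1 i
    | right i => rw [Fin.append_right]; exact hv.1 i
  · rw [sum_append, hu.2, hv.2]
    push_cast
    ring

def repD (m : ℕ) : ℕ → ℕ
  | 0 => 0
  | L + 1 => repD m L + m

def repV {m : ℕ} (v : Fin m → ℝ) : (L : ℕ) → Fin (repD m L) → ℝ
  | 0 => fun _ => 0
  | L + 1 => Fin.append (repV v L) v

lemma univ_repD_zero (m : ℕ) : (Finset.univ : Finset (Fin (repD m 0))) = ∅ :=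
  Finset.eq_empty_of_forall_notMem (fun i _ => (Nat.not_lt_zero _ i.isLt).elim)

lemma repD_eq (m L : ℕ) : repD m L = L * m := by
  induction L with
  | zero => simp [repD]
  | succ L ih => show repD m L + m = _; rw [ih]; ring

lemma CV_rep {m : ℕ} {v : Fin m → ℝ} (hv : IsCountingVector v) (L : ℕ) :
    IsCountingVector (repV v L) := by
  induction L with
  | zero =>
    constructor
    · intro i; exact le_refl 0
    · rw [univ_repD_zero, Finset.sum_empty]
      norm_num [repD]
  | succ L ih => exact CV_append ih hv

lemma rep_entry_le {m : ℕ} {v : Fin m → ℝ} {c : ℝ} (h : ∀ i, v i ≤ c) (hc : 0 ≤ c)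
    (L : ℕ) : ∀ i, repV v L i ≤ c := by
  induction L with
  | zero => intro i; exact hc
  | succ L ih =>
    intro i
    show Fin.append (repV v L) v i ≤ c
    induction i using Fin.addCases with
    | left i => rw [Fin.append_left]; exact ih i
    | right i => rw [Fin.append_right]; exact h i

lemma rep_g_sum (g : ℝ → ℝ) {m : ℕ} (v : Fin m → ℝ) (L : ℕ) (hg0 : g 0 = 0) :
    ∑ i, g (repV v L i) = L * ∑ i, g (v i) := by
  induction L with
  | zero =>
    rw [univ_repD_zero, Finset.sum_empty]
    norm_num
  | succ L ih =>
    have : ∑ i, g (Fin.append (repV v L) v i) = (∑ i, g (repV v L i)) + ∑ i, g (v i) := by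
      have hcomp := append_comp g (repV v L) v
      calc ∑ i, g (Fin.append (repV v L) v i) = ∑ i, (g ∘ Fin.append (repV v L) v) i := rfl
        _ = ∑ i, Fin.append (g ∘ repV v L) (g ∘ v) i := by rw [hcomp]
        _ = _ := sum_append _ _
    rw [show ∑ i, g (repV v (L+1) i) = ∑ i, g (Fin.append (repV v L) v i) from rfl, this, ih]
    push_cast
    ring

lemma mexp_rep {m : ℕ} (v : Fin m → ℝ) (L : ℕ) :
    mexp (repV v L) = L • mexp v := by
  induction L with
  | zero =>
    show mexp (repV v 0) = 0
    unfold mexp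
    rw [univ_repD_zero]
    rfl
  | succ L ih =>
    show mexp (Fin.append (repV v L) v) = _
    rw [mexp_append, ih, succ_nsmul]

/-! ### M-values of building blocks -/

section Mvalues

variable {M : ∀ N : ℕ, (Fin N → ℝ) → ℝ} (hM : IsCoENF M)

lemma M_congr {m n : ℕ} (h : m = n) (v : Fin n → ℝ) :
    M n v = M m (v ∘ Fin.cast h) := by
  subst h
  rfl

include hM

lemma M_empty (v : Fin 0 → ℝ) : M 0 v = 0 := by
  have hcv : IsCountingVector v := ⟨fun i => i.elim0, by simp⟩
  have happ := hM.1 0 0 v v hcv hcv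
  have heq : Fin.append v v = v := by
    funext i
    exact i.elim0
  rw [heq] at happ
  linarith

lemma M_mexp_eq {n : ℕ} {u v : Fin n → ℝ} (hu : IsCountingVector u)
    (h : mexp u = mexp v) : M n u = M n v := by
  obtain ⟨σ, hσ⟩ := exists_perm_of_mexp_eq h
  rw [← hσ]
  exact (hM.2.1 n u hu σ).symm

lemma M_one_one : M 1 (onesV 1) = 0 := by
  have h := hM.2.2.2.2 0
  have heq : (fun k : Fin 1 => if k = 0 then ((0 + 1 : ℕ) : ℝ) else 0) = onesV 1 := by
    funext k
    have : k = 0 := Subsingleton.elim k 0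
    rw [if_pos this]
    norm_num [onesV]
  rw [heq] at h
  rw [h]
  norm_num

lemma M_ones : ∀ m, M m (onesV m) = 0 := by
  intro m
  induction m with
  | zero => exact M_empty hM _
  | succ m ih =>
    have happ := hM.1 m 1 (onesV m) (onesV 1) (CV_ones m) (CV_ones 1)
    have heq : Fin.append (onesV m) (onesV 1) = onesV (m + 1) := by
      funext i
      induction i using Fin.addCases with
      | left i => rw [Fin.append_left]; rfl
      | right i => rw [Fin.append_right]; rfl
    rw [heq] at happ
    rw [happ, ih, M_one_one hM]
    ring

lemma M_bvec (η : ℕ) : M (η + 1) (bvec η) = η := hM.2.2.2.2 η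

lemma M_rep {m : ℕ} {v : Fin m → ℝ} (hv : IsCountingVector v) (L : ℕ) :
    M (repD m L) (repV v L) = L * M m v := by
  induction L with
  | zero =>
    have h0 : (0 : ℕ) = repD m 0 := rfl
    have h1 := M_congr (M := M) h0 (repV v 0)
    rw [h1, M_empty hM _]
    norm_num
  | succ L ih =>
    have happ := hM.1 (repD m L) m (repV v L) v (CV_rep hv L) hv
    rw [show M (repD m (L+1)) (repV v (L+1))
        = M (repD m L + m) (Fin.append (repV v L) v) from rfl, happ, ih]
    push_cast
    ring

end Mvalues

/-! ### three-range step vectors -/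

def triV (a b c : ℕ) (va vb vc : ℝ) : Fin (a + b + c) → ℝ :=
  Fin.append (Fin.append (fun _ : Fin a => va) (fun _ : Fin b => vb)) (fun _ : Fin c => vc)

lemma triV_apply (a b c : ℕ) (va vb vc : ℝ) (i : Fin (a + b + c)) :
    triV a b c va vb vc i = if (i : ℕ) < a then va else if (i : ℕ) < a + b then vb else vc := by
  unfold triV
  induction i using Fin.addCases with
  | left j =>
    rw [Fin.append_left]
    induction j using Fin.addCases with
    | left j' =>
      rw [Fin.append_left]
      have h1 : ((Fin.castAdd c (Fin.castAdd b j') : Fin (a+b+c)) : ℕ) = (j' : ℕ) := rfl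
      rw [h1, if_pos j'.isLt]
    | right j' =>
      rw [Fin.append_right]
      have h1 : ((Fin.castAdd c (Fin.natAdd a j') : Fin (a+b+c)) : ℕ) = a + (j' : ℕ) := rfl
      rw [h1, if_neg (by omega), if_pos (by have := j'.isLt; omega)]
  | right j =>
    rw [Fin.append_right]
    have h1 : ((Fin.natAdd (a + b) j : Fin (a+b+c)) : ℕ) = a + b + (j : ℕ) := rfl
    rw [h1, if_neg (by omega), if_neg (by omega)]

lemma triV_antitone {a b c : ℕ} {va vb vc : ℝ} (h1 : vb ≤ va) (h2 : vc ≤ vb) :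
    Antitone (triV a b c va vb vc) := by
  intro i j hij
  rw [triV_apply, triV_apply]
  have hij' : (i : ℕ) ≤ (j : ℕ) := hij
  by_cases hja : (j : ℕ) < a
  · rw [if_pos hja, if_pos (by omega)]
  rw [if_neg hja]
  by_cases hjb : (j : ℕ) < a + b
  · rw [if_pos hjb]
    by_cases hia : (i : ℕ) < a
    · rw [if_pos hia]; exact h1
    · rw [if_neg hia, if_pos (by omega)]
  rw [if_neg hjb]
  by_cases hia : (i : ℕ) < a
  · rw [if_pos hia]; linarith
  rw [if_neg hia]
  by_cases hib : (i : ℕ) < a + b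
  · rw [if_pos hib]; exact h2
  · rw [if_neg hib]

lemma triV_nonneg {a b c : ℕ} {va vb vc : ℝ} (h1 : 0 ≤ va) (h2 : 0 ≤ vb) (h3 : 0 ≤ vc)
    (i : Fin (a + b + c)) : 0 ≤ triV a b c va vb vc i := by
  rw [triV_apply]
  split
  · exact h1
  split
  · exact h2
  · exact h3

lemma triV_pS1 {a b c k : ℕ} (hk : k ≤ a) (va vb vc : ℝ) :
    pS (triV a b c va vb vc) k = k * va := by
  unfold pS
  have h1 : ∑ i ∈ Finset.univ.filter (fun i : Fin (a+b+c) => (i : ℕ) < k),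
      triV a b c va vb vc i
      = ∑ _i ∈ Finset.univ.filter (fun i : Fin (a+b+c) => (i : ℕ) < k), va := by
    apply Finset.sum_congr rfl
    intro i hi
    rw [Finset.mem_filter] at hi
    rw [triV_apply, if_pos (by omega)]
  rw [h1, Finset.sum_const, nsmul_eq_mul, card_filter_val_lt,
    show min k (a + b + c) = k by omega]

lemma triV_pS2 {a b c k : ℕ} (hk1 : a ≤ k) (hk2 : k ≤ a + b) (va vb vc : ℝ) :
    pS (triV a b c va vb vc) k = a * va + ((k : ℝ) - a) * vb := by
  rw [pS_split _ hk1, triV_pS1 (le_refl a) va vb vc]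
  congr 1
  have h1 : ∑ i ∈ Finset.univ.filter (fun i : Fin (a+b+c) => a ≤ (i : ℕ) ∧ (i : ℕ) < k),
      triV a b c va vb vc i
      = ∑ _i ∈ Finset.univ.filter (fun i : Fin (a+b+c) => a ≤ (i : ℕ) ∧ (i : ℕ) < k), vb := by
    apply Finset.sum_congr rfl
    intro i hi
    rw [Finset.mem_filter] at hi
    rw [triV_apply, if_neg (by omega), if_pos (by omega)]
  rw [h1, Finset.sum_const, nsmul_eq_mul, card_filter_band,
    show min k (a + b + c) - min a (a + b + c) = k - a by omega]
  have h4 : ((k - a : ℕ) : ℝ) = (k : ℝ) - a := by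
    have : a ≤ k := hk1
    push_cast [this]
    ring
  rw [h4]

lemma triV_pS3 {a b c k : ℕ} (hk : a + b ≤ k) (va vb : ℝ) :
    pS (triV a b c va vb 0) k = a * va + b * vb := by
  rw [pS_split _ hk, triV_pS2 (by omega) (le_refl (a+b)) va vb 0]
  have hz : ∑ i ∈ Finset.univ.filter (fun i : Fin (a+b+c) => a + b ≤ (i : ℕ) ∧ (i : ℕ) < k),
      triV a b c va vb 0 i = 0 := by
    apply Finset.sum_eq_zero
    intro i hi
    rw [Finset.mem_filter] at hi
    rw [triV_apply, if_neg (by omega), if_neg (by omega)]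
  rw [hz]
  push_cast
  ring

lemma triV_total {a b c : ℕ} (va vb : ℝ) :
    ∑ i, triV a b c va vb 0 i = a * va + b * vb := by
  rw [← pS_total (triV a b c va vb 0) (le_refl (a+b+c)), triV_pS3 (by omega)]

lemma mexp_triV (a b c : ℕ) (va vb vc : ℝ) :
    mexp (triV a b c va vb vc) =
      Multiset.replicate a va + Multiset.replicate b vb + Multiset.replicate c vc := by
  unfold triV
  rw [mexp_append, mexp_append, mexp_const, mexp_const, mexp_const]

lemma pS_cast {m n : ℕ} (h : m = n) (v : Fin n → ℝ) (k : ℕ) :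
    pS (v ∘ Fin.cast h) k = pS v k := by subst h; rfl

lemma antitone_cast {m n : ℕ} (h : m = n) {v : Fin n → ℝ} (hv : Antitone v) :
    Antitone (v ∘ Fin.cast h) := by subst h; exact hv

lemma CV_cast {m n : ℕ} (h : m = n) {v : Fin n → ℝ} (hv : IsCountingVector v) :
    IsCountingVector (v ∘ Fin.cast h) := by subst h; exact hv

lemma mexp_bvec (η : ℕ) :
    mexp (bvec η) = ((η + 1 : ℕ) : ℝ) ::ₘ Multiset.replicate η 0 := by
  have h2 : (fun i : Fin η => bvec η i.succ) = (fun _ : Fin η => (0:ℝ)) := by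
    funext i
    simp [bvec, Fin.succ_ne_zero]
  have h1 : List.ofFn (bvec η) = ((η + 1 : ℕ) : ℝ) :: List.replicate η 0 := by
    rw [List.ofFn_succ, h2, List.ofFn_const]
    simp [bvec]
  rw [mexp_eq_ofFn, h1]
  rfl

theorem lower_bound {M : ∀ N : ℕ, (Fin N → ℝ) → ℝ} (hM : IsCoENF M)
    {N : ℕ} {P : Fin N → ℝ} (hP : IsCountingVector P) :
    ((Finset.univ.filter (fun i => P i = 0)).card : ℝ) ≤ M N P := by
  classical
  -- partition of the index set
  set zeros := Finset.univ.filter (fun i => P i = 0) with hzeros_def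
  set bigs := Finset.univ.filter (fun i => 1 ≤ P i) with hbigs_def
  set smalls := Finset.univ.filter (fun i => 0 < P i ∧ P i < 1) with hsmalls_def
  set z₀ := zeros.card with hz₀_def
  set n₁ := bigs.card with hn₁_def
  set n₂ := smalls.card with hn₂_def
  have hdisj1 : Disjoint bigs smalls := by
    rw [Finset.disjoint_filter]
    intro i _ h1 h2
    linarith [h2.2]
  have hdisj2 : Disjoint (bigs ∪ smalls) zeros := by
    rw [Finset.disjoint_left]
    intro i hi hz
    rw [Finset.mem_union, hbigs_def, hsmalls_def, Finset.mem_filter, Finset.mem_filter] at hi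
    rw [hzeros_def, Finset.mem_filter] at hz
    rcases hi with h | h
    · linarith [h.2, hz.2]
    · linarith [h.2.1, hz.2]
  have hunion : bigs ∪ smalls ∪ zeros = Finset.univ := by
    ext i
    simp only [Finset.mem_union, hbigs_def, hsmalls_def, hzeros_def, Finset.mem_filter,
      Finset.mem_univ, true_and, iff_true]
    rcases eq_or_lt_of_le (hP.1 i) with h | h
    · right; exact h.symm
    · rcases lt_or_ge (P i) 1 with h2 | h2
      · left; right; exact ⟨h, h2⟩
      · left; left; exact h2
  have hcardN : n₁ + n₂ + z₀ = N := by
    rw [hn₁_def, hn₂_def, hz₀_def, ← Finset.card_union_of_disjoint hdisj1,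
      ← Finset.card_union_of_disjoint hdisj2, hunion]
    simp
  set S₁ := ∑ i ∈ bigs, P i with hS₁_def
  set S₂ := ∑ i ∈ smalls, P i with hS₂_def
  have hsumsplit : S₁ + S₂ = N := by
    have h1 : ∑ i ∈ bigs ∪ smalls ∪ zeros, P i = N := by rw [hunion]; exact hP.2
    rw [Finset.sum_union hdisj2, Finset.sum_union hdisj1] at h1
    have h2 : ∑ i ∈ zeros, P i = 0 := by
      apply Finset.sum_eq_zero
      intro i hi
      rw [hzeros_def, Finset.mem_filter] at hi
      exact hi.2
    rw [h2] at h1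
    linarith
  have hS₂le : S₂ ≤ n₂ := by
    have := Finset.sum_le_card_nsmul smalls P 1 (fun i hi => by
      rw [hsmalls_def, Finset.mem_filter] at hi
      linarith [hi.2.2])
    rw [nsmul_eq_mul, mul_one] at this
    exact this
  have hS₁ge : (n₁ : ℝ) + z₀ ≤ S₁ := by
    have h1 : ((n₁ : ℝ) + n₂ + z₀ : ℝ) = N := by exact_mod_cast congrArg (Nat.cast : ℕ → ℝ) hcardN
    linarith
  -- parameters
  set g := 2 * N + 2 with hg_def
  set j₀ := 2 * z₀ + g with hj₀_def
  set a := z₀ + g with ha_def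
  set b := N + 1 with hb_def
  set Dv := N + j₀ + (g + 1) with hDv_def
  have hn₁N : n₁ ≤ N := by
    rw [hn₁_def, hbigs_def]
    have := Finset.card_filter_le Finset.univ (fun i : Fin N => 1 ≤ P i)
    simpa using this
  have hn₂N : n₂ ≤ N := by
    rw [hn₂_def, hsmalls_def]
    have := Finset.card_filter_le Finset.univ (fun i : Fin N => 0 < P i ∧ P i < 1)
    simpa using this
  have hz₀N : z₀ ≤ N := by omega
  have hdim : a + b + a = Dv := by omega
  -- the target vector V and its sorted version
  set Vapp : Fin Dv → ℝ := Fin.append (Fin.append P (onesV j₀)) (bvec g) with hVapp_def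
  have hCV_PO : IsCountingVector (Fin.append P (onesV j₀)) := CV_append hP (CV_ones j₀)
  have hCV_V : IsCountingVector Vapp := CV_append hCV_PO (CV_bvec g)
  obtain ⟨σ, hσanti⟩ := exists_antitone_perm Vapp
  set sV := Vapp ∘ σ with hsV_def
  have hCV_sV : IsCountingVector sV := CV_comp_perm hCV_V σ
  -- the block vector T and its value
  set T := triV a b a 2 1 0 with hT_def
  have hCV_T : IsCountingVector T := by
    constructor
    · intro i
      exact triV_nonneg (by norm_num) (by norm_num) (le_refl 0) i
    · rw [hT_def, triV_total]
      have h5 : a + b + a = 2 * a + b := by omega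
      rw [h5]
      push_cast
      ring
  have hanti_T : Antitone T := triV_antitone (by norm_num) (by norm_num)
  -- M-value of T
  have hdimW : a + b + a = repD 2 a + b := by
    rw [repD_eq]
    omega
  set Wapp : Fin (repD 2 a + b) → ℝ := Fin.append (repV (bvec 1) a) (onesV b) with hWapp_def
  have hCV_W : IsCountingVector Wapp := CV_append (CV_rep (CV_bvec 1) a) (CV_ones b)
  have hMW : M (repD 2 a + b) Wapp = a := by
    rw [hWapp_def, hM.1 (repD 2 a) b (repV (bvec 1) a) (onesV b) (CV_rep (CV_bvec 1) a)
      (CV_ones b), M_rep hM (CV_bvec 1) a, M_ones hM b, M_bvec hM 1]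
    norm_num
  have hmexp_W : mexp (Wapp ∘ Fin.cast hdimW) = mexp T := by
    rw [mexp_cast]
    have h0 : mexp (onesV b) = Multiset.replicate b (1:ℝ) := mexp_const 1
    have h1 : ((1 + 1 : ℕ) : ℝ) ::ₘ Multiset.replicate 1 (0:ℝ)
        = Multiset.replicate 1 (2:ℝ) + Multiset.replicate 1 (0:ℝ) := by
      rw [Multiset.replicate_one, Multiset.replicate_one, Multiset.singleton_add]
      norm_num
    rw [hWapp_def, mexp_append, mexp_rep, mexp_bvec 1, h0, hT_def, mexp_triV, h1, smul_add,
      Multiset.replicate_one, Multiset.replicate_one, Multiset.nsmul_singleton,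
      Multiset.nsmul_singleton]
    ac_rfl
  have hMT : M (a + b + a) T = a := by
    have h1 := M_congr (M := M) hdimW Wapp
    have h2 : M (a + b + a) T = M (a + b + a) (Wapp ∘ Fin.cast hdimW) :=
      M_mexp_eq hM hCV_T hmexp_W.symm
    rw [h2, ← h1, hMW]
  -- value of M at Vapp
  have hMV : M Dv Vapp = M N P + g := by
    rw [hVapp_def, hM.1 (N + j₀) (g+1) _ _ hCV_PO (CV_bvec g),
      hM.1 N j₀ P (onesV j₀) hP (CV_ones j₀), M_ones hM j₀, M_bvec hM g]
    ring
  -- embeddings into Fin Dv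
  set embP : Fin N ↪ Fin Dv :=
    (Fin.castAddEmb j₀).trans (Fin.castAddEmb (g+1)) with hembP_def
  set embO : Fin j₀ ↪ Fin Dv :=
    (Fin.natAddEmb N).trans (Fin.castAddEmb (g+1)) with hembO_def
  set headIdx : Fin Dv := Fin.natAdd (N + j₀) (0 : Fin (g+1)) with hhead_def
  have hvalP : ∀ i : Fin N, ((embP i : Fin Dv) : ℕ) = (i : ℕ) := fun i => rfl
  have hvalO : ∀ t : Fin j₀, ((embO t : Fin Dv) : ℕ) = N + (t : ℕ) := fun t => rfl
  have hvalH : ((headIdx : Fin Dv) : ℕ) = N + j₀ := by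
    rw [hhead_def]
    simp
  have hvP : ∀ i, Vapp (embP i) = P i := by
    intro i
    show Fin.append (Fin.append P (onesV j₀)) (bvec g)
      (Fin.castAdd (g+1) (Fin.castAdd j₀ i)) = P i
    rw [Fin.append_left, Fin.append_left]
  have hvO : ∀ t, Vapp (embO t) = 1 := by
    intro t
    show Fin.append (Fin.append P (onesV j₀)) (bvec g)
      (Fin.castAdd (g+1) (Fin.natAdd N t)) = 1
    rw [Fin.append_left, Fin.append_right]
    rfl
  have hvH : Vapp headIdx = ((g+1 : ℕ) : ℝ) := by
    rw [hVapp_def, hhead_def, Fin.append_right]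
    simp [bvec]
  -- generic subset with prescribed content
  have hsubsum : ∀ (sel : Finset (Fin N)) (ons : Finset (Fin j₀)),
      ∃ s : Finset (Fin Dv), s.card = 1 + sel.card + ons.card ∧
        ∑ i ∈ s, Vapp i = ((g+1 : ℕ) : ℝ) + (∑ i ∈ sel, P i) + ons.card := by
    intro sel ons
    have hdisjPO : Disjoint (sel.map embP) (ons.map embO) := by
      rw [Finset.disjoint_left]
      intro x hx1 hx2
      obtain ⟨i, _, rfl⟩ := Finset.mem_map.mp hx1
      obtain ⟨t, _, ht⟩ := Finset.mem_map.mp hx2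
      have h1 : ((embP i : Fin Dv) : ℕ) = (i : ℕ) := hvalP i
      have h2 : ((embO t : Fin Dv) : ℕ) = N + (t : ℕ) := hvalO t
      rw [ht] at h2
      have := i.isLt
      omega
    have hheadnot : headIdx ∉ (sel.map embP) ∪ (ons.map embO) := by
      intro hmem
      rw [Finset.mem_union] at hmem
      rcases hmem with h | h
      · obtain ⟨i, _, hi⟩ := Finset.mem_map.mp h
        have h1 := hvalP i
        rw [hi, hvalH] at h1
        have := i.isLt
        omega
      · obtain ⟨t, _, ht⟩ := Finset.mem_map.mp h
        have h1 := hvalO t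
        rw [ht, hvalH] at h1
        have := t.isLt
        omega
    refine ⟨insert headIdx ((sel.map embP) ∪ (ons.map embO)), ?_, ?_⟩
    · rw [Finset.card_insert_of_notMem hheadnot, Finset.card_union_of_disjoint hdisjPO,
        Finset.card_map, Finset.card_map]
      omega
    · rw [Finset.sum_insert hheadnot, Finset.sum_union hdisjPO, Finset.sum_map,
        Finset.sum_map, hvH]
      have h1 : ∑ i ∈ sel, Vapp (embP i) = ∑ i ∈ sel, P i :=
        Finset.sum_congr rfl (fun i _ => hvP i)
      have h2 : ∑ t ∈ ons, Vapp (embO t) = (ons.card : ℝ) := by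
        rw [Finset.sum_congr rfl (fun t _ => hvO t), Finset.sum_const, nsmul_eq_mul, mul_one]
      rw [h1, h2]
      ring
  have hVnonneg : ∀ i, 0 ≤ Vapp i := hCV_V.1
  have hgc : ((g+1 : ℕ) : ℝ) = (g : ℝ) + 1 := by push_cast; ring
  have hac : (a : ℝ) = (z₀ : ℝ) + g := by exact_mod_cast congrArg (Nat.cast : ℕ → ℝ) ha_def
  -- the majorization hypothesis
  have hkey : ∀ k : ℕ, pS T k ≤ pS (sV ∘ Fin.cast hdim) k := by
    intro k
    rw [pS_cast]
    rcases Nat.eq_zero_or_pos k with hk0 | hkpos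
    · subst hk0
      rw [pS_zero, pS_zero]
    have hTmid : k ≤ a + b → pS T k ≤ (k : ℝ) + a := by
      intro hk
      rcases le_or_gt k a with h | h
      · rw [hT_def, triV_pS1 h]
        have : (k : ℝ) ≤ a := by exact_mod_cast h
        linarith
      · rw [hT_def, triV_pS2 h.le hk]
        have : (a : ℝ) ≤ k := by exact_mod_cast h.le
        linarith
    by_cases hkA : k ≤ 1 + n₁
    · -- case A : head and k-1 big entries
      obtain ⟨k₀, hk₀⟩ : ∃ k₀, k = 1 + k₀ := ⟨k - 1, by omega⟩
      obtain ⟨bigs', hbsub, hbcard⟩ := Finset.exists_subset_card_eq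
        (show k₀ ≤ bigs.card by omega)
      obtain ⟨s, hscard, hssum⟩ := hsubsum bigs' ∅
      rw [hbcard, Finset.card_empty] at hscard
      have hs_le : ∑ i ∈ s, Vapp i ≤ pS sV k :=
        sum_subset_le_pS_perm hVnonneg hσanti s (by omega)
      have hbig_ge : (k₀ : ℝ) ≤ ∑ i ∈ bigs', P i := by
        have h6 := Finset.card_nsmul_le_sum bigs' P 1 (fun i hi => by
          have h7 := hbsub hi
          rw [hbigs_def, Finset.mem_filter] at h7
          exact h7.2)
        rw [nsmul_eq_mul, mul_one, hbcard] at h6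
        exact h6
      rw [hssum] at hs_le
      simp only [Finset.card_empty, Nat.cast_zero, add_zero] at hs_le
      rw [hT_def, triV_pS1 (show k ≤ a by omega)]
      have hcast : (k : ℝ) = 1 + (k₀ : ℝ) := by exact_mod_cast congrArg (Nat.cast : ℕ → ℝ) hk₀
      have hgk : (k : ℝ) ≤ (g : ℝ) := by exact_mod_cast (show k ≤ g by omega)
      linarith
    push_neg at hkA
    by_cases hkB : k ≤ a + b
    · by_cases hkO : k - 1 - n₁ ≤ j₀
      · -- case B(α) : head, all bigs, k-1-n₁ ones
        obtain ⟨k₁, hk₁⟩ : ∃ k₁, k = 1 + n₁ + k₁ ∧ k₁ ≤ j₀ := ⟨k - 1 - n₁, by omega, by omega⟩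
        obtain ⟨ons, _, honcard⟩ := Finset.exists_subset_card_eq
          (show k₁ ≤ (Finset.univ : Finset (Fin j₀)).card by rw [Finset.card_fin]; exact hk₁.2)
        obtain ⟨s, hscard, hssum⟩ := hsubsum bigs ons
        rw [honcard] at hscard
        have hs_le : ∑ i ∈ s, Vapp i ≤ pS sV k :=
          sum_subset_le_pS_perm hVnonneg hσanti s (by omega)
        rw [hssum, honcard] at hs_le
        have hT_le := hTmid hkB
        have hcast : (k : ℝ) = 1 + (n₁ : ℝ) + k₁ := by
          exact_mod_cast congrArg (Nat.cast : ℕ → ℝ) hk₁.1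
        linarith
      · -- case B(β) : head, all bigs, all ones, some smalls
        push_neg at hkO
        obtain ⟨k₂, hk₂⟩ : ∃ k₂, k = 1 + n₁ + j₀ + k₂ ∧ k₂ ≤ n₂ := by
          refine ⟨k - 1 - n₁ - j₀, by omega, by omega⟩
        obtain ⟨smalls', hssub, hscard2⟩ := Finset.exists_subset_card_eq
          (show k₂ ≤ smalls.card by omega)
        have hdisjbs : Disjoint bigs smalls' := Finset.disjoint_of_subset_right hssub hdisj1
        obtain ⟨s, hscard, hssum⟩ := hsubsum (bigs ∪ smalls') Finset.univ
        have hcardsel : (bigs ∪ smalls').card = n₁ + k₂ := by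
          rw [Finset.card_union_of_disjoint hdisjbs, hscard2]
        rw [hcardsel, Finset.card_fin] at hscard
        have hs_le : ∑ i ∈ s, Vapp i ≤ pS sV k :=
          sum_subset_le_pS_perm hVnonneg hσanti s (by omega)
        rw [hssum] at hs_le
        have hselsum : ∑ i ∈ bigs ∪ smalls', P i = S₁ + ∑ i ∈ smalls', P i := by
          rw [Finset.sum_union hdisjbs]
        have hsm : S₂ - ((n₂ : ℝ) - k₂) ≤ ∑ i ∈ smalls', P i := by
          have hsd := Finset.sum_sdiff (f := P) hssub
          have hsd_le : ∑ i ∈ smalls \ smalls', P i ≤ ((smalls \ smalls').card : ℝ) := by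
            have h6 := Finset.sum_le_card_nsmul (smalls \ smalls') P 1 (fun i hi => by
              have h7 := (Finset.mem_sdiff.mp hi).1
              rw [hsmalls_def, Finset.mem_filter] at h7
              linarith [h7.2.2])
            rw [nsmul_eq_mul, mul_one] at h6
            exact h6
          have hsdcard : (smalls \ smalls').card = n₂ - k₂ := by
            rw [Finset.card_sdiff_of_subset hssub, hscard2]
          rw [hsdcard] at hsd_le
          have hc : ((n₂ - k₂ : ℕ) : ℝ) = (n₂ : ℝ) - k₂ := by
            push_cast [Nat.cast_sub hk₂.2]
            ring
          rw [hc] at hsd_le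
          linarith
        have hcast : (k : ℝ) = 1 + (n₁ : ℝ) + j₀ + k₂ := by
          exact_mod_cast congrArg (Nat.cast : ℕ → ℝ) hk₂.1
        have hcardNc : (n₁ : ℝ) + n₂ + z₀ = N := by exact_mod_cast congrArg (Nat.cast : ℕ → ℝ) hcardN
        have hT_le := hTmid hkB
        have huc : ((Finset.univ : Finset (Fin j₀)).card : ℝ) = (j₀ : ℝ) := by
          rw [Finset.card_fin]
        rw [huc, hselsum] at hs_le
        linarith
    · -- case C : beyond the support of T
      push_neg at hkB
      obtain ⟨s, hscard, hssum⟩ := hsubsum (bigs ∪ smalls) Finset.univ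
      have hcardsel : (bigs ∪ smalls).card = n₁ + n₂ := by
        rw [Finset.card_union_of_disjoint hdisj1]
      rw [hcardsel, Finset.card_fin] at hscard
      have hs_le : ∑ i ∈ s, Vapp i ≤ pS sV k :=
        sum_subset_le_pS_perm hVnonneg hσanti s (by omega)
      rw [hssum] at hs_le
      have hselsum : ∑ i ∈ bigs ∪ smalls, P i = S₁ + S₂ := by
        rw [Finset.sum_union hdisj1]
      have huc : ((Finset.univ : Finset (Fin j₀)).card : ℝ) = (j₀ : ℝ) := by
        rw [Finset.card_fin]
      rw [hselsum, huc] at hs_le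
      rw [hT_def, triV_pS3 (by omega)]
      have hbc : (b : ℝ) = (N : ℝ) + 1 := by exact_mod_cast congrArg (Nat.cast : ℕ → ℝ) hb_def
      have hjc : (j₀ : ℝ) = 2 * (z₀ : ℝ) + g := by
        exact_mod_cast congrArg (Nat.cast : ℕ → ℝ) hj₀_def
      linarith
  -- apply the core monotonicity theorem
  have hcore := core (M := M) hM.2.1 hM.2.2.2.1
    ((Finset.univ.filter (fun i => T i ≠ (sV ∘ Fin.cast hdim) i)).card) (a + b + a)
    T (sV ∘ Fin.cast hdim) hCV_T (CV_cast hdim hCV_sV) hanti_T (antitone_cast hdim hσanti)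
    (le_refl _) hkey
  have h9 : M (a + b + a) (sV ∘ Fin.cast hdim) = M Dv sV := (M_congr (M := M) hdim sV).symm
  have h10 : M Dv sV = M Dv Vapp := hM.2.1 Dv Vapp hCV_V σ
  rw [hMT, h9, h10, hMV] at hcore
  rw [hac] at hcore
  linarith

theorem upper_bound {M : ∀ N : ℕ, (Fin N → ℝ) → ℝ} (hM : IsCoENF M)
    {N : ℕ} {P : Fin N → ℝ} (hP : IsCountingVector P) :
    M N P ≤ ∑ i, max (1 - P i) 0 := by
  classical
  rcases Nat.eq_zero_or_pos N with hN0 | hNpos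
  · subst hN0
    rw [M_empty hM P]
    simp
  set β₁ := ∑ i, max (1 - P i) 0 with hβ₁_def
  have hβ₁nonneg : 0 ≤ β₁ := Finset.sum_nonneg (fun i _ => le_max_right _ _)
  have hβ₁leN : β₁ ≤ N := by
    rw [hβ₁_def]
    calc ∑ i, max (1 - P i) 0 ≤ ∑ _i : Fin N, (1:ℝ) := by
          apply Finset.sum_le_sum
          intro i _
          rcases le_total (1 - P i) 0 with h | h
          · rw [max_eq_right h]; norm_num
          · rw [max_eq_left h]; linarith [hP.1 i]
      _ = N := by simp
  have hexcess : ∑ i, max (P i - 1) 0 = β₁ := by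
    have h1 : ∀ i : Fin N, max (P i - 1) 0 - max (1 - P i) 0 = P i - 1 := by
      intro i
      rcases le_total (P i) 1 with h | h
      · rw [max_eq_right (by linarith), max_eq_left (by linarith)]; ring
      · rw [max_eq_left (by linarith), max_eq_right (by linarith)]; ring
    have h2 : ∑ i, (max (P i - 1) 0 - max (1 - P i) 0) = ∑ i, (P i - 1) :=
      Finset.sum_congr rfl (fun i _ => h1 i)
    rw [Finset.sum_sub_distrib] at h2
    have h3 : ∑ i : Fin N, (P i - 1) = 0 := by
      rw [Finset.sum_sub_distrib, hP.2]
      simp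
    rw [h3] at h2
    linarith
  -- key estimate for every number of copies L
  have hLbound : ∀ L : ℕ, 1 ≤ L → (L : ℝ) * M N P ≤ L * β₁ + N := by
    intro L hL
    set J := 9 * (N + 1) with hJ_def
    set U : Fin (N + J) → ℝ := Fin.append P (onesV J) with hU_def
    have hCV_U : IsCountingVector U := CV_append hP (CV_ones J)
    have hMU : M (N + J) U = M N P := by
      rw [hU_def, hM.1 N J P (onesV J) hP (CV_ones J), M_ones hM J]
      ring
    set DU := repD (N + J) L with hDU_def
    have hDU_eq : DU = L * (N + J) := repD_eq _ _
    set VU := repV U L with hVU_def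
    have hCV_VU : IsCountingVector VU := CV_rep hCV_U L
    have hMVU : M DU VU = L * M N P := by
      rw [hVU_def, M_rep hM hCV_U L, hMU]
    set t := Nat.ceil ((L : ℝ) * β₁ / N) with ht_def
    have hNR : (0:ℝ) < N := by exact_mod_cast hNpos
    have htN : (L : ℝ) * β₁ ≤ t * N := by
      have h1 : (L : ℝ) * β₁ / N ≤ t := Nat.le_ceil _
      calc (L : ℝ) * β₁ = ((L : ℝ) * β₁ / N) * N := by field_simp
        _ ≤ t * N := mul_le_mul_of_nonneg_right h1 (le_of_lt hNR)
    have htN2 : (t : ℝ) * N ≤ L * β₁ + N := by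
      have h1 : (t : ℝ) < (L : ℝ) * β₁ / N + 1 := Nat.ceil_lt_add_one (by positivity)
      have h3 : (t : ℝ) * N < ((L : ℝ) * β₁ / N + 1) * N := mul_lt_mul_of_pos_right h1 hNR
      have h4 : ((L : ℝ) * β₁ / N + 1) * N = L * β₁ + N := by field_simp
      linarith
    have htL : t ≤ L + 1 := by
      rw [ht_def]
      apply Nat.ceil_le.mpr
      have h5 : (L : ℝ) * β₁ / N ≤ L := by
        rw [div_le_iff₀ hNR]
        have h6 : (0:ℝ) ≤ L := by positivity
        nlinarith
      push_cast
      linarith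
    have hts : t * (N + 1) ≤ DU := by
      rw [hDU_eq]
      calc t * (N + 1) ≤ (L + 1) * (N + 1) := Nat.mul_le_mul_right _ htL
        _ ≤ (2 * L) * (N + 1) := Nat.mul_le_mul_right _ (by omega)
        _ = L * (2 * (N + 1)) := by ring
        _ ≤ L * (N + J) := Nat.mul_le_mul_left _ (by omega)
    set s := DU - t * (N + 1) with hs_def
    have hsum_ts : t * (N + 1) + s = DU := by omega
    set zU := t * N with hzU_def
    have hdimT : DU = t + s + zU := by
      have h1 : t * (N + 1) = t * N + t := by ring
      omega
    set TU := triV t s zU ((N + 1 : ℕ) : ℝ) 1 0 with hTU_def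
    have hCV_TU : IsCountingVector TU := by
      constructor
      · intro i
        exact triV_nonneg (by positivity) (by norm_num) (le_refl 0) i
      · rw [hTU_def, triV_total, hzU_def]
        push_cast
        ring
    have hanti_TU : Antitone TU := by
      apply triV_antitone
      · exact_mod_cast Nat.succ_le_succ (Nat.zero_le N)
      · norm_num
    have hdimW : t + s + zU = repD (N + 1) t + s := by
      rw [repD_eq, hzU_def]
      have h1 : t * (N + 1) = t * N + t := by ring
      omega
    set WU : Fin (repD (N+1) t + s) → ℝ := Fin.append (repV (bvec N) t) (onesV s) with hWU_def
    have hMWU : M (repD (N+1) t + s) WU = (t : ℝ) * N := by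
      rw [hWU_def, hM.1 _ _ _ _ (CV_rep (CV_bvec N) t) (CV_ones s),
        M_rep hM (CV_bvec N) t, M_ones hM s, M_bvec hM N]
      ring
    have hmexpWU : mexp (WU ∘ Fin.cast hdimW) = mexp TU := by
      rw [mexp_cast]
      have h0 : mexp (onesV s) = Multiset.replicate s (1:ℝ) := mexp_const 1
      rw [hWU_def, mexp_append, mexp_rep, mexp_bvec N, h0, hTU_def, mexp_triV]
      rw [show ((N+1:ℕ):ℝ) ::ₘ Multiset.replicate N (0:ℝ)
          = {((N+1:ℕ):ℝ)} + Multiset.replicate N 0 from (Multiset.singleton_add _ _).symm,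
        smul_add, Multiset.nsmul_singleton]
      have h2 : t • Multiset.replicate N (0:ℝ) = Multiset.replicate zU (0:ℝ) := by
        rw [← Multiset.nsmul_singleton, ← mul_nsmul, Multiset.nsmul_singleton, hzU_def,
          Nat.mul_comm]
      rw [h2]
      ac_rfl
    have hMTU : M (t + s + zU) TU = (t:ℝ) * N := by
      have h1 := M_congr (M := M) hdimW WU
      have h2 : M (t+s+zU) TU = M (t+s+zU) (WU ∘ Fin.cast hdimW) :=
        M_mexp_eq hM hCV_TU hmexpWU.symm
      rw [h2, ← h1, hMWU]
    obtain ⟨σU, hσUanti⟩ := exists_antitone_perm VU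
    set sVU := VU ∘ σU with hsVU_def
    have hCV_sVU : IsCountingVector sVU := CV_comp_perm hCV_VU σU
    have hUentry : ∀ i, U i ≤ (N:ℝ) := by
      intro i
      rw [hU_def]
      induction i using Fin.addCases with
      | left i => rw [Fin.append_left]; exact entry_le_of_CV hP i
      | right i =>
        rw [Fin.append_right]
        show (1:ℝ) ≤ N
        exact_mod_cast hNpos
    have hVUentry : ∀ i, VU i ≤ (N:ℝ) := rep_entry_le hUentry (by positivity) L
    have hVUexcess : ∑ i, max (VU i - 1) 0 = L * β₁ := by
      rw [hVU_def, rep_g_sum (fun x => max (x - 1) 0) U L (by norm_num)]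
      have h1 : ∑ i, max (U i - 1) 0 = β₁ := by
        rw [hU_def]
        have hc := append_comp (fun x => max (x - 1) 0) P (onesV J)
        calc ∑ i, max (Fin.append P (onesV J) i - 1) 0
            = ∑ i, Fin.append (fun i => max (P i - 1) 0) (fun i => max (onesV J i - 1) 0) i :=
              Finset.sum_congr rfl (fun i _ => congrFun hc i)
          _ = (∑ i, max (P i - 1) 0) + ∑ i : Fin J, max (onesV J i - 1) 0 := sum_append _ _
          _ = β₁ := by
              rw [hexcess]
              norm_num [onesV]
      rw [h1]
    have hkeyU : ∀ k, pS sVU k ≤ pS (TU ∘ Fin.cast hdimT) k := by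
      intro k
      rw [pS_cast]
      by_cases hk1 : k ≤ t
      · rw [hTU_def, triV_pS1 hk1]
        have hc : ((N:ℕ):ℝ) ≤ ((N+1:ℕ):ℝ) := by push_cast; linarith
        calc pS sVU k ≤ k * (N:ℝ) :=
              pS_le_of_entries_le (fun i => hVUentry (σU i)) (le_of_lt hNR) k
          _ ≤ k * ((N+1:ℕ):ℝ) := mul_le_mul_of_nonneg_left hc (by positivity)
      by_cases hk2 : k ≤ t + s
      · push_neg at hk1
        rw [hTU_def, triV_pS2 hk1.le hk2]
        have hexc := pS_le_excess sVU k
        have hsum2 : ∑ i, max (sVU i - 1) 0 = L * β₁ := by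
          rw [hsVU_def,
            show ∑ i, max ((VU ∘ σU) i - 1) 0
              = ∑ i, (fun j => max (VU j - 1) 0) (σU i) from rfl,
            Equiv.sum_comp σU (fun j => max (VU j - 1) 0), hVUexcess]
        rw [hsum2] at hexc
        have hr : (t:ℝ) * ((N+1:ℕ):ℝ) + ((k:ℝ) - t) * 1 = k + (t:ℝ) * N := by
          push_cast
          ring
        rw [hr]
        linarith
      · push_neg at hk2
        rw [hTU_def, triV_pS3 (by omega)]
        have h1 : pS sVU k ≤ (DU:ℝ) := by
          have h2 := pS_le_total (fun i => hCV_sVU.1 i) k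
          rw [hCV_sVU.2] at h2
          exact h2
        have h3 : (t:ℝ) * ((N+1:ℕ):ℝ) + (s:ℝ) * 1 = (DU:ℝ) := by
          have h4 := congrArg (Nat.cast : ℕ → ℝ) hsum_ts
          push_cast at h4 ⊢
          linarith
        linarith
    have hcore := core (M := M) hM.2.1 hM.2.2.2.1
      ((Finset.univ.filter (fun i => sVU i ≠ (TU ∘ Fin.cast hdimT) i)).card) DU
      sVU (TU ∘ Fin.cast hdimT) hCV_sVU (CV_cast hdimT hCV_TU) hσUanti
      (antitone_cast hdimT hanti_TU) (le_refl _) hkeyU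
    have h9 : M DU (TU ∘ Fin.cast hdimT) = M (t+s+zU) TU := (M_congr (M := M) hdimT TU).symm
    have h10 : M DU sVU = M DU VU := hM.2.1 DU VU hCV_VU σU
    rw [h9, h10, hMVU, hMTU] at hcore
    linarith
  -- let L → ∞
  by_contra hcon
  push_neg at hcon
  set ε := M N P - β₁ with hε_def
  have hεpos : 0 < ε := by
    rw [hε_def]
    linarith
  obtain ⟨L, hL⟩ := exists_nat_gt ((N:ℝ) / ε)
  have hL1 : 1 ≤ L := by
    by_contra h
    push_neg at h
    have hL0 : L = 0 := by omega
    subst hL0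
    have : (0:ℝ) ≤ (N:ℝ) / ε := by positivity
    norm_num at hL
    linarith
  have hb := hLbound L hL1
  have hMP : M N P = β₁ + ε := by rw [hε_def]; ring
  rw [hMP] at hb
  have hexp : (L:ℝ) * (β₁ + ε) = L * β₁ + L * ε := by ring
  rw [hexp] at hb
  have h4 : (N:ℝ) < L * ε := by
    rw [div_lt_iff₀ hεpos] at hL
    linarith
  linarith

/-! ### co-ENFs generated by convex profile functions -/

lemma convex_pair {m : ℝ → ℝ} (hconv : ConvexOn ℝ (Set.Ici 0) m) {x y ε : ℝ}
    (hx : 0 ≤ x - ε) (hxy : x ≤ y) (hε : 0 < ε) :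
    m x + m y ≤ m (x - ε) + m (y + ε) := by
  set c := x - ε with hc
  set d := y + ε with hd
  have hdc : 0 < d - c := by rw [hc, hd]; linarith
  set θ := (d - x) / (d - c) with hθ
  have hθ0 : 0 ≤ θ := by
    apply div_nonneg _ (le_of_lt hdc)
    rw [hd]; linarith
  have hθ1 : θ ≤ 1 := by
    rw [hθ, div_le_one hdc, hc]
    linarith
  have hcmem : c ∈ Set.Ici (0:ℝ) := hx
  have hdmem : d ∈ Set.Ici (0:ℝ) := by
    simp only [Set.mem_Ici, hd]
    linarith
  have hx_comb : θ * c + (1 - θ) * d = x := by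
    rw [hθ]
    field_simp
    ring
  have hy_comb : (1 - θ) * c + θ * d = y := by
    rw [hθ]
    field_simp
    ring
  have h1 := hconv.2 hcmem hdmem hθ0 (by linarith : (0:ℝ) ≤ 1 - θ) (by ring)
  have h2 := hconv.2 hcmem hdmem (by linarith : (0:ℝ) ≤ 1 - θ) hθ0 (by ring)
  simp only [smul_eq_mul] at h1 h2
  rw [hx_comb] at h1
  rw [hy_comb] at h2
  linarith

/-- the co-ENF generated by a profile function `m` -/
def genM (m : ℝ → ℝ) : ∀ n : ℕ, (Fin n → ℝ) → ℝ := fun _n v => ∑ i, m (v i)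

lemma isCoENF_gen {m : ℝ → ℝ} (hcont : Continuous m) (hconv : ConvexOn ℝ (Set.Ici 0) m)
    (h0 : m 0 = 1) (h1 : ∀ x : ℝ, 1 ≤ x → m x = 0) : IsCoENF (genM m) := by
  refine ⟨?_, ?_, ?_, ?_, ?_⟩
  · -- additivity
    intro n k p q _ _
    show ∑ i, m (Fin.append p q i) = (∑ i, m (p i)) + ∑ i, m (q i)
    calc ∑ i, m (Fin.append p q i)
        = ∑ i, Fin.append (m ∘ p) (m ∘ q) i :=
          Finset.sum_congr rfl (fun i _ => congrFun (append_comp m p q) i)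
      _ = _ := sum_append _ _
  · -- symmetry
    intro n p _ σ
    exact Equiv.sum_comp σ (fun i => m (p i))
  · -- continuity
    intro n
    apply Continuous.continuousOn
    apply continuous_finset_sum
    intro i _
    exact hcont.comp (continuous_apply i)
  · -- cumulation monotonicity
    intro n p _ i j hij hpij ε hε hεi _
    set p' := Function.update (Function.update p i (p i - ε)) j (p j + ε) with hp'
    have hp'j : p' j = p j + ε := by rw [hp', Function.update_self]
    have hp'i : p' i = p i - ε := by
      rw [hp', Function.update_of_ne hij, Function.update_self]
    have hp'x : ∀ x, x ≠ i → x ≠ j → p' x = p x := by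
      intro x hxi hxj
      rw [hp', Function.update_of_ne hxj, Function.update_of_ne hxi]
    have hmem : i ∈ Finset.univ.erase j := Finset.mem_erase.mpr ⟨hij, Finset.mem_univ i⟩
    have hs1 : ∀ f : Fin n → ℝ,
        ∑ x, f x = f j + (f i + ∑ x ∈ (Finset.univ.erase j).erase i, f x) := by
      intro f
      rw [Finset.add_sum_erase _ f hmem, Finset.add_sum_erase _ f (Finset.mem_univ j)]
    show ∑ x, m (p x) ≤ ∑ x, m (p' x)
    rw [hs1 (fun x => m (p x)), hs1 (fun x => m (p' x))]
    have hrest : ∑ x ∈ (Finset.univ.erase j).erase i, m (p' x)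
        = ∑ x ∈ (Finset.univ.erase j).erase i, m (p x) := by
      apply Finset.sum_congr rfl
      intro x hx
      rw [Finset.mem_erase] at hx
      have hx2 := Finset.mem_erase.mp hx.2
      rw [hp'x x hx.1 hx2.1]
    rw [hrest, hp'i, hp'j]
    have := convex_pair hconv (by linarith : 0 ≤ p i - ε) hpij hε
    linarith
  · -- boundary values
    intro n
    show ∑ k : Fin (n+1), m (if k = 0 then ((n+1:ℕ):ℝ) else 0) = n
    rw [Fin.sum_univ_succ]
    have ht : ∑ i : Fin n, m (if (i.succ : Fin (n+1)) = 0 then ((n+1:ℕ):ℝ) else 0)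
        = ∑ _i : Fin n, (1:ℝ) := by
      apply Finset.sum_congr rfl
      intro i _
      rw [if_neg (Fin.succ_ne_zero i), h0]
    rw [ht, if_pos rfl, h1 _ (by exact_mod_cast Nat.succ_le_succ (Nat.zero_le n))]
    simp

lemma convexOn_affine (a b : ℝ) : ConvexOn ℝ Set.univ (fun x : ℝ => a * x + b) := by
  constructor
  · exact convex_univ
  · intro x _ y _ s t hs ht hst
    apply le_of_eq
    simp only [smul_eq_mul]
    linear_combination (-b) * hst

lemma convexOn_maxAffine (a b : ℝ) : ConvexOn ℝ Set.univ (fun x : ℝ => max (a * x + b) 0) :=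
  (convexOn_affine a b).sup (convexOn_const 0 convex_univ)

end CoProof

open scoped Classical in
theorem coENF_value_range (N : ℕ) (P : Fin N → ℝ) (hP : IsCountingVector P)
    (β₀ β₁ : ℝ)
    (hβ₀ : β₀ = ((Finset.univ.filter (fun i => P i = 0)).card : ℝ))
    (hβ₁ : β₁ = ∑ i, max (1 - P i) 0) :
    -- (i) all co-ENF values at P lie in [β₀, β₁]
    (∀ M : ∀ n : ℕ, (Fin n → ℝ) → ℝ, IsCoENF M → M N P ∈ Set.Icc β₀ β₁) ∧
    -- (ii) β₀ = β₁ iff no entry of P lies in (0,1)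
    (β₀ = β₁ ↔ ∀ i, P i ∉ Set.Ioo (0 : ℝ) 1) ∧
    -- (iii) if β₀ < β₁ then every value in [β₀, β₁] is attained
    (β₀ < β₁ →
      {y : ℝ | ∃ M : ∀ n : ℕ, (Fin n → ℝ) → ℝ, IsCoENF M ∧ M N P = y}
        = Set.Icc β₀ β₁) := by
  classical
  have hβ₀sum : β₀ = ∑ i, (if P i = 0 then (1:ℝ) else 0) := by
    rw [hβ₀]
    exact (Finset.sum_boole _ _).symm
  -- part (i)
  have hpart1 : ∀ M : ∀ n : ℕ, (Fin n → ℝ) → ℝ, IsCoENF M → M N P ∈ Set.Icc β₀ β₁ := by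
    intro M hM
    constructor
    · rw [hβ₀]
      exact CoProof.lower_bound hM hP
    · rw [hβ₁]
      exact CoProof.upper_bound hM hP
  -- part (ii)
  have hf : ∀ i : Fin N, (0:ℝ) ≤ max (1 - P i) 0 - (if P i = 0 then 1 else 0) := by
    intro i
    by_cases h : P i = 0
    · rw [if_pos h, h]
      norm_num
    · rw [if_neg h]
      simp [le_max_right]
  have hdiff : β₁ - β₀ = ∑ i, (max (1 - P i) 0 - (if P i = 0 then 1 else 0)) := by
    rw [Finset.sum_sub_distrib, ← hβ₁, ← hβ₀sum]
  have hpart2 : β₀ = β₁ ↔ ∀ i, P i ∉ Set.Ioo (0:ℝ) 1 := by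
    constructor
    · intro heq i hmem
      obtain ⟨h1, h2⟩ := hmem
      have hzero : ∑ i, (max (1 - P i) 0 - (if P i = 0 then 1 else 0)) = 0 := by
        rw [← hdiff, heq]
        ring
      have hz := (Finset.sum_eq_zero_iff_of_nonneg (fun i _ => hf i)).mp hzero i
        (Finset.mem_univ i)
      rw [if_neg (by intro hc; rw [hc] at h1; exact lt_irrefl 0 h1)] at hz
      have hmax : max (1 - P i) 0 = 1 - P i := max_eq_left (by linarith)
      rw [hmax] at hz
      linarith
    · intro hno
      have hz : ∀ i ∈ Finset.univ, (max (1 - P i) 0 - (if P i = 0 then 1 else 0)) = 0 := by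
        intro i _
        by_cases h : P i = 0
        · rw [if_pos h, h]
          norm_num
        · rw [if_neg h]
          have hpos : 0 < P i := lt_of_le_of_ne (hP.1 i) (Ne.symm h)
          have hge : 1 ≤ P i := by
            by_contra hcon
            push_neg at hcon
            exact hno i ⟨hpos, hcon⟩
          rw [max_eq_right (by linarith)]
          ring
      have h5 : β₁ - β₀ = 0 := by
        rw [hdiff, Finset.sum_eq_zero hz]
      linarith
  refine ⟨hpart1, hpart2, ?_⟩
  -- part (iii)
  intro hlt
  ext y
  simp only [Set.mem_setOf_eq]
  constructor
  · rintro ⟨M, hM, rfl⟩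
    exact hpart1 M hM
  · intro hy
    obtain ⟨hy1, hy2⟩ := hy
    have hex : ∃ i, P i ∈ Set.Ioo (0:ℝ) 1 := by
      by_contra hcon
      push_neg at hcon
      have := hpart2.mpr hcon
      linarith
    obtain ⟨i₀, hi₀⟩ := hex
    set posF := Finset.univ.filter (fun i => 0 < P i) with hposF
    have hne : posF.Nonempty :=
      ⟨i₀, by rw [hposF, Finset.mem_filter]; exact ⟨Finset.mem_univ _, hi₀.1⟩⟩
    set δ := min (posF.inf' hne P) 1 with hδ
    have hδpos : 0 < δ := by
      rw [hδ]
      apply lt_min _ one_pos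
      rw [Finset.lt_inf'_iff]
      intro i hi
      rw [hposF, Finset.mem_filter] at hi
      exact hi.2
    have hδ1 : δ ≤ 1 := min_le_right _ _
    have hδle : ∀ i, 0 < P i → δ ≤ P i := by
      intro i hi
      calc δ ≤ posF.inf' hne P := min_le_left _ _
        _ ≤ P i := Finset.inf'_le P
            (by rw [hposF, Finset.mem_filter]; exact ⟨Finset.mem_univ _, hi⟩)
    set t := (y - β₀) / (β₁ - β₀) with ht
    have hden : 0 < β₁ - β₀ := by linarith
    have ht0 : 0 ≤ t := div_nonneg (by linarith) (le_of_lt hden)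
    have ht1 : t ≤ 1 := by
      rw [ht, div_le_one hden]
      linarith
    set mfun := fun x : ℝ =>
      (1 - t) * max ((-(1/δ)) * x + 1) 0 + t * max ((-1) * x + 1) 0 with hmfun
    have hcont : Continuous mfun := by
      apply Continuous.add
      · exact continuous_const.mul
          (((continuous_const.mul continuous_id').add continuous_const).max continuous_const)
      · exact continuous_const.mul
          (((continuous_const.mul continuous_id').add continuous_const).max continuous_const)
    have hconv : ConvexOn ℝ (Set.Ici 0) mfun := by
      have h1 := (CoProof.convexOn_maxAffine (-(1/δ)) 1).smul (by linarith : (0:ℝ) ≤ 1 - t)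
      have h2 := (CoProof.convexOn_maxAffine (-1) 1).smul ht0
      exact ((h1.add h2).subset (Set.subset_univ _) (convex_Ici 0))
    have hm0 : mfun 0 = 1 := by
      rw [hmfun]
      norm_num
    have hm1 : ∀ x : ℝ, 1 ≤ x → mfun x = 0 := by
      intro x hx
      simp only [hmfun]
      have ha1 : (-(1/δ)) * x + 1 ≤ 0 := by
        have h6 : (1/δ) * δ ≤ (1/δ) * x := by
          apply mul_le_mul_of_nonneg_left (by linarith) (by positivity)
        have h7 : (1/δ) * δ = 1 := by field_simp
        linarith
      have ha2 : (-1) * x + 1 ≤ 0 := by linarith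
      rw [max_eq_right ha1, max_eq_right ha2]
      ring
    have hval : CoProof.genM mfun N P = y := by
      show ∑ i, mfun (P i) = y
      have hsplit : ∑ i, mfun (P i)
          = (1 - t) * (∑ i, max ((-(1/δ)) * P i + 1) 0)
            + t * (∑ i, max ((-1) * P i + 1) 0) := by
        rw [Finset.mul_sum, Finset.mul_sum, ← Finset.sum_add_distrib]
      have hlo : ∑ i, max ((-(1/δ)) * P i + 1) 0 = β₀ := by
        rw [hβ₀sum]
        apply Finset.sum_congr rfl
        intro i _
        by_cases h : P i = 0
        · rw [if_pos h, h]
          norm_num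
        · rw [if_neg h]
          have hpos : 0 < P i := lt_of_le_of_ne (hP.1 i) (Ne.symm h)
          have hle := hδle i hpos
          have h6 : (1/δ) * δ ≤ (1/δ) * P i :=
            mul_le_mul_of_nonneg_left hle (by positivity)
          have h7 : (1/δ) * δ = 1 := by field_simp
          rw [max_eq_right (by linarith)]
      have hhi : ∑ i, max ((-1) * P i + 1) 0 = β₁ := by
        rw [hβ₁]
        apply Finset.sum_congr rfl
        intro i _
        congr 1
        ring
      rw [hsplit, hlo, hhi, ht]
      field_simp
      ring
    exact ⟨CoProof.genM mfun,
      CoProof.isCoENF_gen hcont hconv hm0 hm1, hval⟩
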